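/- (Proposition 3, phase-space symmetries.) Assume: (i) P and Q are Hermitian, tridiagonal with zero diagonal (entries nonzero only when the row and column indices differ by 1), all entries of Q are real and all entries of P are purely imaginary; (ii) the spectra are symmetric, i.e. p_k = −p_{N−k} and q_l = −q_{N−l} for all k,l ∈ {0,…,N}. Then for each n ∈ {0,…,N} the Wigner matrix satisfies the reflection symmetries W(n)_{k,l} = W(n)_{N−k,l} = W(n)_{k,N−l} = W(n)_{N−k,N−l} for all k,l ∈ {0,…,N}. -/

import Mathlib

open Matrix

/-- The Weyl-symmetrized operator `Ĝ_{a,b}(P,Q)`: `1/C(a+b,a)` times the sum over all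
subsets `S` of `{1,…,a+b}` of size `a` of the ordered product `X_1 ⋯ X_{a+b}` with
`X_i = P` if `i ∈ S` and `X_i = Q` otherwise. -/
noncomputable def weylG {N : ℕ} (P Q : Matrix (Fin (N + 1)) (Fin (N + 1)) ℂ) (a b : ℕ) :
    Matrix (Fin (N + 1)) (Fin (N + 1)) ℂ :=
  (((a + b).choose a : ℂ))⁻¹ •
    ∑ S ∈ Finset.univ.filter (fun S : Finset (Fin (a + b)) => S.card = a),
      (List.ofFn fun i : Fin (a + b) => if i ∈ S then P else Q).prod

/-- The matrix `Z(n)` with entries `Z(n)_{a,b} = (Ĝ_{a,b}(P,Q))_{n,n}`, `a,b ∈ {0,…,N}`. -/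
noncomputable def zMat {N : ℕ} (P Q : Matrix (Fin (N + 1)) (Fin (N + 1)) ℂ)
    (n : Fin (N + 1)) : Matrix (Fin (N + 1)) (Fin (N + 1)) ℂ :=
  Matrix.of fun a b : Fin (N + 1) => weylG P Q a.val b.val n n

/-- The Wigner matrix `W(n) = V(p)⁻ᵀ ⬝ Z(n) ⬝ V(q)⁻¹`, where `V(x)` is the Vandermonde
matrix on the spectrum `x` (regarded as a complex matrix). -/
noncomputable def wignerW {N : ℕ} (P Q : Matrix (Fin (N + 1)) (Fin (N + 1)) ℂ)
    (p q : Fin (N + 1) → ℝ) (n : Fin (N + 1)) : Matrix (Fin (N + 1)) (Fin (N + 1)) ℂ :=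
  ((Matrix.vandermonde fun k => (p k : ℂ))ᵀ)⁻¹ * zMat P Q n *
    (Matrix.vandermonde fun l => (q l : ℂ))⁻¹

/-! ### Auxiliary lemmas -/

private theorem tri_prod_parity {N : ℕ} (L : List (Matrix (Fin (N+1)) (Fin (N+1)) ℂ))
    (hL : ∀ M ∈ L, ∀ i j : Fin (N+1), j.val ≠ i.val + 1 → i.val ≠ j.val + 1 → M i j = 0) :
    ∀ i j : Fin (N+1), (i.val + j.val + L.length) % 2 = 1 → L.prod i j = 0 := by
  induction L with
  | nil =>
    intro i j hpar
    have : i ≠ j := by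
      intro h; subst h; simp at hpar; omega
    simp [Matrix.one_apply_ne this]
  | cons M L ih =>
    intro i j hpar
    rw [List.prod_cons, Matrix.mul_apply]
    apply Finset.sum_eq_zero
    intro t _
    by_cases ht : t.val = i.val + 1 ∨ i.val = t.val + 1
    · have : L.prod t j = 0 := by
        apply ih (fun M hM => hL M (List.mem_cons_of_mem _ hM))
        simp only [List.length_cons] at hpar
        omega
      rw [this, mul_zero]
    · push_neg at ht
      rw [hL M List.mem_cons_self i t ht.1 ht.2, zero_mul]

private theorem revOfFn {α : Type*} {n : ℕ} (f : Fin n → α) :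
    (List.ofFn f).reverse = List.ofFn (fun i => f i.rev) := by
  apply List.ext_getElem
  · simp
  · intro i h1 h2
    simp only [List.getElem_reverse, List.getElem_ofFn, List.length_ofFn] at *
    congr 1
    ext
    simp [Fin.val_rev]
    omega

private theorem ofFn_smul_prod {N : ℕ} (m : ℕ) (c : Fin m → ℂ)
    (f : Fin m → Matrix (Fin (N+1)) (Fin (N+1)) ℂ) :
    (List.ofFn fun i => c i • f i).prod = (∏ i, c i) • (List.ofFn f).prod := by
  induction m with
  | zero => simp
  | succ m ih =>
    rw [List.ofFn_succ, List.ofFn_succ, List.prod_cons, List.prod_cons,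
      ih (fun i => c i.succ) (fun i => f i.succ), Fin.prod_univ_succ]
    rw [smul_mul_assoc, mul_smul_comm, smul_smul]

private theorem weylG_transpose {N : ℕ} (P Q : Matrix (Fin (N + 1)) (Fin (N + 1)) ℂ)
    (hP : Pᵀ = -P) (hQ : Qᵀ = Q) (a b : ℕ) :
    (weylG P Q a b)ᵀ = ((-1 : ℂ)^a) • weylG P Q a b := by
  unfold weylG
  rw [Matrix.transpose_smul, smul_comm]
  congr 1
  rw [Matrix.transpose_sum, Finset.smul_sum]
  refine Finset.sum_nbij' (i := fun S => S.map Fin.revPerm.toEmbedding)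
    (j := fun S => S.map Fin.revPerm.toEmbedding) ?_ ?_ ?_ ?_ ?_
  · intro S hS
    simp only [Finset.mem_filter, Finset.mem_univ, true_and, Finset.card_map] at *
    exact hS
  · intro S hS
    simp only [Finset.mem_filter, Finset.mem_univ, true_and, Finset.card_map] at *
    exact hS
  · intro S hS
    ext i
    simp [Finset.mem_map_equiv]
  · intro S hS
    ext i
    simp [Finset.mem_map_equiv]
  · intro S hS
    simp only [Finset.mem_filter, Finset.mem_univ, true_and] at hS
    rw [Matrix.transpose_list_prod, List.map_ofFn, revOfFn]
    have h1 : (List.ofFn fun i : Fin (a+b) => (Matrix.transpose ∘ fun i : Fin (a+b) =>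
        if i ∈ S then P else Q) i.rev) =
        List.ofFn fun i : Fin (a+b) => (if i.rev ∈ S then (-1:ℂ) else 1) •
          (if i.rev ∈ S then P else Q) := by
      congr 1
      funext i
      by_cases h : i.rev ∈ S <;> simp [h, hP, hQ]
    rw [h1, ofFn_smul_prod]
    have h2 : (∏ i : Fin (a+b), if i.rev ∈ S then (-1:ℂ) else 1) = (-1:ℂ)^a := by
      rw [show (∏ i : Fin (a+b), if i.rev ∈ S then (-1:ℂ) else 1)
          = ∏ i : Fin (a+b), if i ∈ S then (-1:ℂ) else 1 from
        Equiv.prod_comp Fin.revPerm (fun i => if i ∈ S then (-1:ℂ) else 1)]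
      rw [Finset.prod_ite_mem Finset.univ S (fun _ => (-1:ℂ)), Finset.univ_inter,
        Finset.prod_const, hS]
    rw [h2]
    congr 2
    ext i
    simp [Finset.mem_map_equiv]

section Vand
variable {N : ℕ} (x : Fin (N+1) → ℝ)

private noncomputable abbrev Vm : Matrix (Fin (N+1)) (Fin (N+1)) ℂ :=
  Matrix.vandermonde fun k => (x k : ℂ)
private noncomputable def Rm : Matrix (Fin (N+1)) (Fin (N+1)) ℂ :=
  Matrix.of fun i j => if j = i.rev then (1:ℂ) else 0
private noncomputable def Dm : Matrix (Fin (N+1)) (Fin (N+1)) ℂ :=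
  Matrix.diagonal fun s : Fin (N+1) => (-1:ℂ)^(s:ℕ)

private theorem hdetV (hx : Function.Injective x) : IsUnit (Vm x).det := by
  rw [isUnit_iff_ne_zero]
  apply Matrix.det_vandermonde_ne_zero_iff.mpr
  intro i j h
  exact hx (Complex.ofReal_injective h)

private theorem hRV (hsym : ∀ k : Fin (N+1), x k.rev = -x k) :
    (Rm : Matrix (Fin (N+1)) (Fin (N+1)) ℂ) * Vm x = Vm x * Dm := by
  ext i j
  rw [Matrix.mul_apply, Finset.sum_eq_single i.rev
    (fun t _ ht => by rw [show (Rm : Matrix (Fin (N+1)) (Fin (N+1)) ℂ) i t = 0 from if_neg ht,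
      zero_mul])
    (fun h => absurd (Finset.mem_univ _) h)]
  rw [show (Rm : Matrix (Fin (N+1)) (Fin (N+1)) ℂ) i i.rev = 1 from if_pos rfl, one_mul,
    Dm, Matrix.mul_diagonal]
  show ((x i.rev : ℂ))^(j:ℕ) = ((x i : ℂ))^(j:ℕ) * (-1)^(j:ℕ)
  rw [hsym]
  push_cast
  rw [neg_pow]
  ring

private theorem hRR : (Rm : Matrix (Fin (N+1)) (Fin (N+1)) ℂ) * Rm = 1 := by
  ext i j
  rw [Matrix.mul_apply, Finset.sum_eq_single i.rev
    (fun t _ ht => by rw [show (Rm : Matrix (Fin (N+1)) (Fin (N+1)) ℂ) i t = 0 from if_neg ht,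
      zero_mul])
    (fun h => absurd (Finset.mem_univ _) h)]
  rw [show (Rm : Matrix (Fin (N+1)) (Fin (N+1)) ℂ) i i.rev = 1 from if_pos rfl, one_mul]
  show (if j = i.rev.rev then (1:ℂ) else 0) = (1 : Matrix (Fin (N+1)) (Fin (N+1)) ℂ) i j
  rw [Fin.rev_rev, Matrix.one_apply]
  by_cases h : i = j
  · rw [if_pos h.symm, if_pos h]
  · rw [if_neg (fun hh => h hh.symm), if_neg h]

private theorem hDD : (Dm : Matrix (Fin (N+1)) (Fin (N+1)) ℂ) * Dm = 1 := by
  rw [Dm, Matrix.diagonal_mul_diagonal]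
  convert Matrix.diagonal_one
  rw [← pow_add]
  exact Even.neg_one_pow ⟨_, rfl⟩

private theorem vand_inv_rev (hx : Function.Injective x)
    (hsym : ∀ k : Fin (N+1), x k.rev = -x k) (b l : Fin (N+1)) :
    (Vm x)⁻¹ b l.rev = (-1:ℂ)^(b:ℕ) * (Vm x)⁻¹ b l := by
  have hinv : (Vm x)⁻¹ = Dm * (Vm x)⁻¹ * Rm := by
    apply Matrix.inv_eq_right_inv
    calc Vm x * (Dm * (Vm x)⁻¹ * Rm) = (Vm x * Dm) * (Vm x)⁻¹ * Rm := by
          rw [Matrix.mul_assoc, Matrix.mul_assoc, Matrix.mul_assoc]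
      _ = (Rm * Vm x) * (Vm x)⁻¹ * Rm := by rw [hRV x hsym]
      _ = Rm * ((Vm x) * (Vm x)⁻¹) * Rm := by rw [Matrix.mul_assoc (Rm) _ _]
      _ = Rm * Rm := by rw [Matrix.mul_nonsing_inv _ (hdetV x hx), Matrix.mul_one]
      _ = 1 := hRR
  conv_lhs => rw [hinv]
  rw [Matrix.mul_apply, Finset.sum_eq_single l
    (fun t _ ht => by
      rw [show (Rm : Matrix (Fin (N+1)) (Fin (N+1)) ℂ) t l.rev = 0 from
        if_neg (fun h => ht (by rw [← Fin.rev_rev t, ← h, Fin.rev_rev])), mul_zero])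
    (fun h => absurd (Finset.mem_univ _) h)]
  rw [show (Rm : Matrix (Fin (N+1)) (Fin (N+1)) ℂ) l l.rev = 1 from if_pos rfl,
    mul_one, Dm, Matrix.diagonal_mul]

private theorem vandT_inv_rev (hx : Function.Injective x)
    (hsym : ∀ k : Fin (N+1), x k.rev = -x k) (k a : Fin (N+1)) :
    ((Vm x)ᵀ)⁻¹ k.rev a = (-1:ℂ)^(a:ℕ) * ((Vm x)ᵀ)⁻¹ k a := by
  have hRsym : (Rm : Matrix (Fin (N+1)) (Fin (N+1)) ℂ)ᵀ = Rm := by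
    ext i j
    show (if i = j.rev then (1:ℂ) else 0) = (if j = i.rev then (1:ℂ) else 0)
    by_cases h : i = j.rev
    · rw [if_pos h, if_pos (by rw [h, Fin.rev_rev])]
    · rw [if_neg h, if_neg (fun hh => h (by rw [hh, Fin.rev_rev]))]
  have hWR : (Vm x)ᵀ * Rm = Dm * (Vm x)ᵀ := by
    have h2 := congrArg Matrix.transpose (hRV x hsym)
    rwa [Matrix.transpose_mul, Matrix.transpose_mul, hRsym,
      show (Dm : Matrix (Fin (N+1)) (Fin (N+1)) ℂ)ᵀ = Dm from Matrix.diagonal_transpose _] at h2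
  have hdetW : IsUnit ((Vm x)ᵀ).det := by rw [Matrix.det_transpose]; exact hdetV x hx
  have hinv : ((Vm x)ᵀ)⁻¹ = Rm * ((Vm x)ᵀ)⁻¹ * Dm := by
    apply Matrix.inv_eq_right_inv
    calc (Vm x)ᵀ * (Rm * ((Vm x)ᵀ)⁻¹ * Dm) = ((Vm x)ᵀ * Rm) * ((Vm x)ᵀ)⁻¹ * Dm := by
          rw [Matrix.mul_assoc, Matrix.mul_assoc, Matrix.mul_assoc]
      _ = (Dm * (Vm x)ᵀ) * ((Vm x)ᵀ)⁻¹ * Dm := by rw [hWR]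
      _ = Dm * ((Vm x)ᵀ * ((Vm x)ᵀ)⁻¹) * Dm := by rw [Matrix.mul_assoc Dm _ _]
      _ = Dm * Dm := by rw [Matrix.mul_nonsing_inv _ hdetW, Matrix.mul_one]
      _ = 1 := hDD
  conv_lhs => rw [hinv]
  rw [Dm, Matrix.mul_diagonal, mul_comm]
  congr 1
  rw [Matrix.mul_apply, Finset.sum_eq_single k
    (fun t _ ht => by
      rw [show (Rm : Matrix (Fin (N+1)) (Fin (N+1)) ℂ) k.rev t = 0 from
        if_neg (fun h => ht (by rw [h, Fin.rev_rev])), zero_mul])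
    (fun h => absurd (Finset.mem_univ _) h)]
  rw [show (Rm : Matrix (Fin (N+1)) (Fin (N+1)) ℂ) k.rev k = 1 from
    if_pos (Fin.rev_rev k).symm, one_mul]

end Vand

section Zvanish
variable {N : ℕ} {P Q : Matrix (Fin (N + 1)) (Fin (N + 1)) ℂ}

private theorem weylG_diag_zero_parity
    (hPtri : ∀ i j : Fin (N + 1), j.val ≠ i.val + 1 → i.val ≠ j.val + 1 → P i j = 0)
    (hQtri : ∀ i j : Fin (N + 1), j.val ≠ i.val + 1 → i.val ≠ j.val + 1 → Q i j = 0)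
    {a b : ℕ} (hab : (a + b) % 2 = 1) (n : Fin (N+1)) :
    weylG P Q a b n n = 0 := by
  unfold weylG
  rw [Matrix.smul_apply, Matrix.sum_apply]
  rw [Finset.sum_eq_zero, smul_zero]
  intro S _
  apply tri_prod_parity
  · intro M hM i j h1 h2
    obtain ⟨t, ht⟩ := List.mem_ofFn.mp hM
    by_cases hts : t ∈ S
    · rw [← ht, if_pos hts]; exact hPtri i j h1 h2
    · rw [← ht, if_neg hts]; exact hQtri i j h1 h2
  · rw [List.length_ofFn]
    omega

private theorem weylG_diag_zero_odd (hP : Pᵀ = -P) (hQ : Qᵀ = Q)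
    {a : ℕ} (b : ℕ) (ha : a % 2 = 1) (n : Fin (N+1)) :
    weylG P Q a b n n = 0 := by
  have h := congrArg (fun M : Matrix (Fin (N+1)) (Fin (N+1)) ℂ => M n n)
    (weylG_transpose P Q hP hQ a b)
  simp only [Matrix.transpose_apply, Matrix.smul_apply, smul_eq_mul] at h
  rw [Odd.neg_one_pow ⟨a/2, by omega⟩, neg_one_mul] at h
  have h2 : (2:ℂ) * weylG P Q a b n n = 0 := by linear_combination h
  rcases mul_eq_zero.mp h2 with h3 | h3
  · exact absurd h3 two_ne_zero
  · exact h3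

end Zvanish

/-- Proposition 3, phase-space symmetries: if `P`, `Q` are Hermitian, tridiagonal with zero
diagonal, `Q` real, `P` purely imaginary, and the spectra are symmetric
(`p_{N-k} = -p_k`, `q_{N-l} = -q_l`), then the Wigner matrix satisfies the reflection
symmetries `W(n)_{k,l} = W(n)_{N-k,l} = W(n)_{k,N-l} = W(n)_{N-k,N-l}`. -/
theorem wignerW_reflection_symm {N : ℕ}
    (P Q : Matrix (Fin (N + 1)) (Fin (N + 1)) ℂ)
    (hPh : P.IsHermitian) (hQh : Q.IsHermitian)
    (hPtri : ∀ i j : Fin (N + 1), j.val ≠ i.val + 1 → i.val ≠ j.val + 1 → P i j = 0)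
    (hQtri : ∀ i j : Fin (N + 1), j.val ≠ i.val + 1 → i.val ≠ j.val + 1 → Q i j = 0)
    (hQreal : ∀ i j : Fin (N + 1), (Q i j).im = 0)
    (hPimag : ∀ i j : Fin (N + 1), (P i j).re = 0)
    (p q : Fin (N + 1) → ℝ) (hp : Function.Injective p) (hq : Function.Injective q)
    (hpsym : ∀ k : Fin (N + 1), p k.rev = -p k)
    (hqsym : ∀ l : Fin (N + 1), q l.rev = -q l)
    (n : Fin (N + 1)) :
    ∀ k l : Fin (N + 1),
      wignerW P Q p q n k l = wignerW P Q p q n k.rev l ∧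
      wignerW P Q p q n k l = wignerW P Q p q n k l.rev ∧
      wignerW P Q p q n k l = wignerW P Q p q n k.rev l.rev := by
  -- transpose facts
  have hP : Pᵀ = -P := by
    ext i j
    have h1 : P j i = star (P i j) := by
      conv_lhs => rw [← hPh]
      rw [Matrix.conjTranspose_apply]
    rw [Matrix.transpose_apply, h1, Matrix.neg_apply]
    apply Complex.ext <;> simp [hPimag i j]
  have hQ : Qᵀ = Q := by
    ext i j
    have h1 : Q j i = star (Q i j) := by
      conv_lhs => rw [← hQh]
      rw [Matrix.conjTranspose_apply]
    rw [Matrix.transpose_apply, h1]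
    apply Complex.ext <;> simp [hQreal i j]
  -- vanishing of Z entries
  have hZ : ∀ a b : Fin (N+1), (a.val % 2 = 1 ∨ b.val % 2 = 1) →
      zMat P Q n a b = 0 := by
    intro a b hab
    rcases Nat.mod_two_eq_zero_or_one a.val with hae | hao
    · rcases hab with h | h
      · omega
      · exact weylG_diag_zero_parity hPtri hQtri (by omega) n
    · exact weylG_diag_zero_odd hP hQ _ hao n
  -- reflection in the first index
  have h1 : ∀ k l : Fin (N + 1), wignerW P Q p q n k.rev l = wignerW P Q p q n k l := by
    intro k l
    unfold wignerW
    rw [Matrix.mul_apply, Matrix.mul_apply]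
    apply Finset.sum_congr rfl
    intro b _
    congr 1
    rw [Matrix.mul_apply, Matrix.mul_apply]
    apply Finset.sum_congr rfl
    intro a _
    rw [vandT_inv_rev p hp hpsym k a]
    rcases Nat.mod_two_eq_zero_or_one a.val with hae | hao
    · rw [(Nat.even_iff.mpr hae).neg_one_pow, one_mul]
    · rw [hZ a b (Or.inl hao), mul_zero, mul_zero]
  -- reflection in the second index
  have h2 : ∀ k l : Fin (N + 1), wignerW P Q p q n k l.rev = wignerW P Q p q n k l := by
    intro k l
    unfold wignerW
    rw [Matrix.mul_apply, Matrix.mul_apply]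
    apply Finset.sum_congr rfl
    intro b _
    rw [vand_inv_rev q hq hqsym b l]
    rcases Nat.mod_two_eq_zero_or_one b.val with hbe | hbo
    · rw [(Nat.even_iff.mpr hbe).neg_one_pow, one_mul]
    · have hz : (((Matrix.vandermonde fun k => (p k : ℂ))ᵀ)⁻¹ * zMat P Q n) k b = 0 := by
        rw [Matrix.mul_apply]
        apply Finset.sum_eq_zero
        intro a _
        rw [hZ a b (Or.inr hbo), mul_zero]
      rw [hz, zero_mul, zero_mul]
  intro k l
  refine ⟨(h1 k l).symm, (h2 k l).symm, ?_⟩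
  rw [h1 k l.rev, h2 k l]
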